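/- Let k ≥ 1, let 0 < α < 1/2 and ε > 0 be constants, and for each n let s = ⌊αn⌋ and G = K_{s,n−s} be the complete bipartite graph on [n] with parts of sizes s and n − s. Let X be a binomial random graph G(n, p) with p = n^{−(1+ε)/(k(1−2α))}. Then with high probability the graph G + X contains no kth power of a Hamilton cycle. -/

import Mathlib

open Finset
open scoped Classical

/-- The `k`th power of a Hamilton cycle in a graph `Γ` on vertex set `Fin n`:
a bijection `π` such that `π i` and `π (i + d)` are adjacent for all `1 ≤ d ≤ k`
(indices cyclic modulo `n`). -/
def IsPowHamCycle (n k : ℕ) (Γ : SimpleGraph (Fin n)) (π : Equiv.Perm (Fin n)) : Prop :=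
  ∀ i d : Fin n, 1 ≤ d.val → d.val ≤ k → Γ.Adj (π i) (π (i + d))

/-- The edge set of the complete graph on `Fin n`. -/
def completeEdges (n : ℕ) : Finset (Sym2 (Fin n)) :=
  Finset.univ.filter fun e => ¬ e.IsDiag

/-- The probability, under the binomial random graph `G(n, p)` (each possible edge present
independently with probability `p`), that the (random) edge set satisfies `Q`. -/
noncomputable def binomProb (n : ℕ) (p : ℝ) (Q : Finset (Sym2 (Fin n)) → Prop) : ℝ :=
  ∑ ω ∈ (completeEdges n).powerset,
    if Q ω then p ^ ω.card * (1 - p) ^ ((completeEdges n).card - ω.card) else 0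

/-- The complete bipartite graph `K_{s, n−s}` on `Fin n`, with parts
`A = {v : v < s}` and `B = {v : s ≤ v}`. -/
def bipGraph (n s : ℕ) : SimpleGraph (Fin n) :=
  SimpleGraph.fromRel fun u v => u.val < s ∧ s ≤ v.val

/-! ### Auxiliary probability lemmas -/

lemma sum_weight_one {ι : Type*} [DecidableEq ι] (E : Finset ι) (p : ℝ) :
    ∑ ω ∈ E.powerset, p ^ ω.card * (1 - p) ^ (E.card - ω.card) = 1 := by
  have h := Finset.prod_add (fun _ : ι => p) (fun _ : ι => 1 - p) E
  simp only [add_sub_cancel, Finset.prod_const, one_pow] at h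
  conv_rhs => rw [h]
  apply Finset.sum_congr rfl
  intro t ht
  rw [Finset.card_sdiff_of_subset (Finset.mem_powerset.mp ht)]

lemma sum_weight_superset {ι : Type*} [DecidableEq ι] (E S : Finset ι) (hS : S ⊆ E) (p : ℝ) :
    ∑ ω ∈ E.powerset, (if S ⊆ ω then p ^ ω.card * (1 - p) ^ (E.card - ω.card) else 0)
      = p ^ S.card := by
  rw [Finset.sum_ite, Finset.sum_const_zero, add_zero]
  have hbij : ∑ ω ∈ (E.powerset).filter (fun ω => S ⊆ ω),
      p ^ ω.card * (1 - p) ^ (E.card - ω.card)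
      = ∑ T ∈ (E \ S).powerset, p ^ (S.card + T.card) * (1 - p) ^ (E.card - (S.card + T.card)) := by
    apply Finset.sum_nbij' (fun ω => ω \ S) (fun T => S ∪ T)
    · intro ω hω
      simp only [Finset.mem_filter, Finset.mem_powerset] at hω
      exact Finset.mem_powerset.mpr (Finset.sdiff_subset_sdiff hω.1 le_rfl)
    · intro T hT
      simp only [Finset.mem_powerset] at hT
      simp only [Finset.mem_filter, Finset.mem_powerset]
      exact ⟨Finset.union_subset hS (hT.trans Finset.sdiff_subset), Finset.subset_union_left⟩
    · intro ω hω
      simp only [Finset.mem_filter, Finset.mem_powerset] at hω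
      exact Finset.union_sdiff_of_subset hω.2
    · intro T hT
      simp only [Finset.mem_powerset] at hT
      exact Finset.union_sdiff_cancel_left (Finset.disjoint_of_subset_right hT Finset.disjoint_sdiff)
    · intro ω hω
      simp only [Finset.mem_filter, Finset.mem_powerset] at hω
      have h1 : S.card + (ω \ S).card = ω.card := by
        rw [Finset.card_sdiff_of_subset hω.2]
        have := Finset.card_le_card hω.2
        omega
      rw [h1]
  rw [hbij]
  have h2 : ∀ T ∈ (E \ S).powerset,
      p ^ (S.card + T.card) * (1 - p) ^ (E.card - (S.card + T.card))
      = p ^ S.card * (p ^ T.card * (1 - p) ^ ((E \ S).card - T.card)) := by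
    intro T hT
    rw [pow_add, mul_assoc, Finset.card_sdiff_of_subset hS, Nat.sub_sub]
  rw [Finset.sum_congr rfl h2, ← Finset.mul_sum, sum_weight_one, mul_one]

lemma weight_nonneg {p : ℝ} (hp0 : 0 ≤ p) (hp1 : p ≤ 1) (a b : ℕ) :
    0 ≤ p ^ a * (1 - p) ^ b :=
  mul_nonneg (pow_nonneg hp0 a) (pow_nonneg (by linarith) b)

lemma binomProb_compl (n : ℕ) (p : ℝ) (Q : Finset (Sym2 (Fin n)) → Prop) :
    binomProb n p Q = 1 - binomProb n p (fun ω => ¬ Q ω) := by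
  rw [eq_sub_iff_add_eq]
  unfold binomProb
  rw [← Finset.sum_add_distrib]
  conv_rhs => rw [← sum_weight_one (completeEdges n) p]
  apply Finset.sum_congr rfl
  intro ω _
  by_cases h : Q ω <;> simp [h]

lemma binomProb_nonneg {n : ℕ} {p : ℝ} (hp0 : 0 ≤ p) (hp1 : p ≤ 1)
    (Q : Finset (Sym2 (Fin n)) → Prop) : 0 ≤ binomProb n p Q := by
  apply Finset.sum_nonneg
  intro ω _
  split
  · exact weight_nonneg hp0 hp1 _ _
  · exact le_refl 0

lemma binomProb_union_bound {n : ℕ} {p : ℝ} (hp0 : 0 ≤ p) (hp1 : p ≤ 1)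
    (P : Equiv.Perm (Fin n) → Finset (Sym2 (Fin n)) → Prop) :
    binomProb n p (fun ω => ¬ ∀ π, ¬ P π ω)
      ≤ ∑ π : Equiv.Perm (Fin n), binomProb n p (fun ω => P π ω) := by
  unfold binomProb
  rw [Finset.sum_comm]
  apply Finset.sum_le_sum
  intro ω _
  by_cases h : ∀ π, ¬ P π ω
  · rw [if_neg (not_not_intro h)]
    apply Finset.sum_nonneg
    intro π _
    split
    · exact weight_nonneg hp0 hp1 _ _
    · exact le_refl 0
  · rw [if_pos h]
    push_neg at h
    obtain ⟨π₀, hπ₀⟩ := h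
    calc p ^ ω.card * (1 - p) ^ ((completeEdges n).card - ω.card)
        = (if P π₀ ω then p ^ ω.card * (1 - p) ^ ((completeEdges n).card - ω.card) else 0) := by
          rw [if_pos hπ₀]
      _ ≤ _ := Finset.single_le_sum (f := fun π : Equiv.Perm (Fin n) =>
            (if P π ω then p ^ ω.card * (1 - p) ^ ((completeEdges n).card - ω.card) else 0))
            (fun π _ => by split; exacts [weight_nonneg hp0 hp1 _ _, le_refl 0])
            (Finset.mem_univ π₀)

lemma binomProb_le_of_superset {n : ℕ} {p : ℝ} (hp0 : 0 ≤ p) (hp1 : p ≤ 1)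
    {P : Finset (Sym2 (Fin n)) → Prop} {S : Finset (Sym2 (Fin n))}
    (hS : S ⊆ completeEdges n) (hPS : ∀ ω, P ω → S ⊆ ω) {m : ℕ} (hm : m ≤ S.card) :
    binomProb n p P ≤ p ^ m := by
  have h1 : binomProb n p P ≤
      ∑ ω ∈ (completeEdges n).powerset,
        (if S ⊆ ω then p ^ ω.card * (1 - p) ^ ((completeEdges n).card - ω.card) else 0) := by
    apply Finset.sum_le_sum
    intro ω _
    by_cases h : P ω
    · rw [if_pos h, if_pos (hPS ω h)]
    · rw [if_neg h]
      split
      · exact weight_nonneg hp0 hp1 _ _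
      · exact le_refl 0
  rw [sum_weight_superset _ _ hS] at h1
  exact h1.trans (pow_le_pow_of_le_one hp0 hp1 hm)

/-! ### Combinatorial lemmas -/

lemma val_add_cases {n : ℕ} (i d : Fin n) :
    (i + d).val = i.val + d.val ∨ (i + d).val + n = i.val + d.val := by
  rw [Fin.val_add]
  rcases Nat.lt_or_ge (i.val + d.val) n with h | h
  · left; exact Nat.mod_eq_of_lt h
  · right
    have hi := i.isLt; have hd := d.isLt
    have h2 : i.val + d.val - n < n := by omega
    rw [Nat.mod_eq_sub_mod h, Nat.mod_eq_of_lt h2]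
    omega

lemma card_filter_comp_equiv {α β : Type*} [Fintype α] [Fintype β] (f : α ≃ β)
    (p : β → Prop) [DecidablePred p] :
    (Finset.univ.filter fun i => p (f i)).card = (Finset.univ.filter p).card := by
  apply Finset.card_nbij (i := fun a => f a)
  · intro a ha
    simp only [Finset.mem_filter, Finset.mem_univ, true_and] at *
    simpa using ha
  · intro a _ b _ hab
    exact f.injective hab
  · intro b hb
    simp only [Finset.coe_filter, Finset.mem_univ, true_and, Set.mem_setOf_eq] at *
    exact ⟨f.symm b, by simpa using hb, by simp⟩

lemma card_lt_filter {n s : ℕ} :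
    ((Finset.univ : Finset (Fin n)).filter fun v => v.val < s).card ≤ s := by
  have := Finset.card_le_card_of_injOn (f := Fin.val)
    (s := (Finset.univ : Finset (Fin n)).filter fun v => v.val < s) (t := Finset.range s)
    (by intro a ha; simp at ha ⊢; exact ha)
    (fun a _ b _ h => Fin.ext h)
  simpa using this

lemma exists_forced_edges (n k s : ℕ) (hk : 1 ≤ k) (h2k : 2 * k < n) (π : Equiv.Perm (Fin n)) :
    ∃ S : Finset (Sym2 (Fin n)), S ⊆ completeEdges n ∧ k * n - 2 * k * s ≤ S.card ∧
      ∀ ω : Finset (Sym2 (Fin n)),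
        IsPowHamCycle n k (bipGraph n s ⊔ SimpleGraph.fromEdgeSet (↑ω)) π → S ⊆ ω := by
  have hn : 0 < n := by omega
  set Pred : Fin n × Fin n → Prop :=
    fun q => (1 ≤ q.2.val ∧ q.2.val ≤ k) ∧ s ≤ (π q.1).val ∧ s ≤ (π (q.1 + q.2)).val with hPred
  set good : Finset (Fin n × Fin n) := Finset.univ.filter Pred with hgood
  refine ⟨good.image (fun q => s(π q.1, π (q.1 + q.2))), ?_, ?_, ?_⟩
  · -- subset of completeEdges
    intro e he
    simp only [Finset.mem_image] at he
    obtain ⟨q, hq, rfl⟩ := he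
    simp only [hgood, Finset.mem_filter, hPred] at hq
    simp only [completeEdges, Finset.mem_filter, Finset.mem_univ, true_and, Sym2.isDiag_iff_proj_eq]
    intro hdiag
    have : q.1 + q.2 = q.1 := π.injective hdiag.symm
    have hv := congrArg Fin.val this
    rcases val_add_cases q.1 q.2 with h | h <;> omega
  · -- cardinality
    rw [Finset.card_image_of_injOn]
    · -- good.card ≥ k*n - 2*k*s
      have hcf : good.card = ∑ d : Fin n, ((Finset.univ : Finset (Fin n)).filter
          (fun i => Pred (i, d))).card := by
        rw [hgood, Finset.card_filter]
        rw [Fintype.sum_prod_type_right]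
        apply Finset.sum_congr rfl
        intro d _
        rw [Finset.card_filter]
      have hinner : ∀ d : Fin n, 1 ≤ d.val → d.val ≤ k →
          n - 2 * s ≤ ((Finset.univ : Finset (Fin n)).filter (fun i => Pred (i, d))).card := by
        intro d hd1 hd2
        have hsub : (Finset.univ : Finset (Fin n)) \
            (((Finset.univ : Finset (Fin n)).filter fun i => (π i).val < s) ∪
             ((Finset.univ : Finset (Fin n)).filter fun i => (π (i + d)).val < s))
            ⊆ (Finset.univ.filter (fun i => Pred (i, d))) := by
          intro i hi
          simp only [Finset.mem_sdiff, Finset.mem_union, Finset.mem_filter, Finset.mem_univ,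
            true_and, not_or, not_lt] at hi
          simp only [Finset.mem_filter, Finset.mem_univ, true_and, hPred]
          exact ⟨⟨hd1, hd2⟩, hi.1, hi.2⟩
        have h1 : (((Finset.univ : Finset (Fin n)).filter fun i => (π i).val < s)).card ≤ s := by
          rw [card_filter_comp_equiv π (fun v : Fin n => v.val < s)]
          exact card_lt_filter
        have h2 : (((Finset.univ : Finset (Fin n)).filter fun i => (π (i + d)).val < s)).card ≤ s := by
          haveI : NeZero n := ⟨by omega⟩
          have hce := card_filter_comp_equiv ((Equiv.addRight d).trans (π : Fin n ≃ Fin n))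
            (fun v : Fin n => v.val < s)
          simp only [Equiv.trans_apply, Equiv.coe_addRight] at hce
          refine le_trans (le_of_eq ?_) (card_lt_filter (n := n) (s := s))
          convert hce
          rfl
        have hcard := Finset.card_le_card hsub
        have hc2 : ((Finset.univ : Finset (Fin n)) \
            (((Finset.univ : Finset (Fin n)).filter fun i => (π i).val < s) ∪
             ((Finset.univ : Finset (Fin n)).filter fun i => (π (i + d)).val < s))).card
            = n - ((((Finset.univ : Finset (Fin n)).filter fun i => (π i).val < s) ∪
             ((Finset.univ : Finset (Fin n)).filter fun i => (π (i + d)).val < s))).card := by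
          rw [Finset.card_sdiff_of_subset (Finset.subset_univ _), Finset.card_univ, Fintype.card_fin]
        have hu := Finset.card_union_le
          (((Finset.univ : Finset (Fin n)).filter fun i => (π i).val < s))
          (((Finset.univ : Finset (Fin n)).filter fun i => (π (i + d)).val < s))
        omega
      have hge : ∑ d : Fin n, (if 1 ≤ d.val ∧ d.val ≤ k then n - 2 * s else 0)
          ≤ ∑ d : Fin n, ((Finset.univ : Finset (Fin n)).filter (fun i => Pred (i, d))).card := by
        apply Finset.sum_le_sum
        intro d _
        by_cases hd : 1 ≤ d.val ∧ d.val ≤ k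
        · rw [if_pos hd]; exact hinner d hd.1 hd.2
        · rw [if_neg hd]; exact Nat.zero_le _
      have hD : ∑ d : Fin n, (if 1 ≤ d.val ∧ d.val ≤ k then n - 2 * s else 0)
          = k * (n - 2 * s) := by
        rw [Finset.sum_ite, Finset.sum_const_zero, add_zero, Finset.sum_const, smul_eq_mul]
        congr 1
        have : ((Finset.univ : Finset (Fin n)).filter fun d => 1 ≤ d.val ∧ d.val ≤ k).card
            = (Finset.Icc 1 k).card := by
          apply Finset.card_nbij (i := Fin.val)
          · intro a ha
            simp only [Finset.coe_filter, Finset.mem_coe, Set.mem_setOf_eq, Finset.mem_filter, Finset.mem_univ, true_and, Finset.mem_Icc] at *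
            exact ha
          · intro a _ b _ h
            exact Fin.ext h
          · intro j hj
            simp only [Finset.coe_sort_coe, Finset.mem_coe, Finset.mem_Icc] at hj
            refine ⟨⟨j, by omega⟩, ?_, rfl⟩
            simp only [Finset.coe_filter, Set.mem_setOf_eq, Finset.mem_univ, true_and]
            exact ⟨hj.1, hj.2⟩
        rw [Finset.filter_congr (fun d _ => Iff.rfl)] at this ⊢
        rw [this, Nat.card_Icc]
        omega
      have hfin : k * n - 2 * k * s ≤ k * (n - 2 * s) := by
        rw [Nat.mul_sub]; ring_nf; omega
      omega
    · -- injectivity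
      intro q hq q' hq' heq
      simp only [hgood, Finset.coe_filter, Set.mem_setOf_eq, hPred] at hq hq'
      rw [Sym2.eq_iff] at heq
      have hq1 := (q.1 + q.2).isLt
      have hq2 := q.2.isLt
      have hq1' := (q'.1 + q'.2).isLt
      have hq2' := q'.2.isLt
      rcases heq with ⟨h1, h2⟩ | ⟨h1, h2⟩
      · have e1 : q.1 = q'.1 := π.injective h1
        have e2 : q.1 + q.2 = q'.1 + q'.2 := π.injective h2
        have hv1 := congrArg Fin.val e1
        have hv2 := congrArg Fin.val e2
        rcases val_add_cases q.1 q.2 with ha | ha <;> rcases val_add_cases q'.1 q'.2 with hb | hb <;>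
          (apply Prod.ext <;> apply Fin.ext <;> omega)
      · have e1 : q.1 = q'.1 + q'.2 := π.injective h1
        have e2 : q.1 + q.2 = q'.1 := π.injective h2
        have hv1 := congrArg Fin.val e1
        have hv2 := congrArg Fin.val e2
        rcases val_add_cases q.1 q.2 with ha | ha <;> rcases val_add_cases q'.1 q'.2 with hb | hb <;>
          (exfalso; omega)
  · -- forced into ω
    intro ω hHam e he
    simp only [Finset.mem_image] at he
    obtain ⟨q, hq, rfl⟩ := he
    simp only [hgood, Finset.mem_filter, hPred, Finset.mem_univ, true_and] at hq
    obtain ⟨⟨hd1, hd2⟩, hs1, hs2⟩ := hq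
    have hadj := hHam q.1 q.2 hd1 hd2
    simp only [SimpleGraph.sup_adj, bipGraph, SimpleGraph.fromRel_adj,
      SimpleGraph.fromEdgeSet_adj, Finset.mem_coe] at hadj
    rcases hadj with ⟨_, h | h⟩ | ⟨h, _⟩
    · omega
    · omega
    · exact h

/-! ### Asymptotic estimate -/

lemma final_bound (k : ℕ) (hk : 1 ≤ k) (α ε : ℝ) (hα0 : 0 < α) (hα : α < 1/2) (hε : 0 < ε)
    (n : ℕ) (hn : 2 * k < n) :
    (n.factorial : ℝ) * ((n:ℝ) ^ (-(1 + ε) / ((k:ℝ) * (1 - 2 * α)))) ^ (k * n - 2 * k * ⌊α * n⌋₊)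
      ≤ (n:ℝ) ^ (-ε : ℝ) := by
  have hn0 : 0 < n := by omega
  have hn1 : (1:ℝ) ≤ (n:ℝ) := by exact_mod_cast hn0
  have hnpos : (0:ℝ) < (n:ℝ) := by linarith
  have hkR : (1:ℝ) ≤ (k:ℝ) := by exact_mod_cast hk
  have hden : (0:ℝ) < (k:ℝ) * (1 - 2 * α) := by nlinarith
  set c : ℝ := (1 + ε) / ((k:ℝ) * (1 - 2 * α)) with hc
  have hcpos : 0 < c := div_pos (by linarith) hden
  have hce : -(1 + ε) / ((k:ℝ) * (1 - 2 * α)) = -c := by rw [hc, neg_div]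
  set m : ℕ := k * n - 2 * k * ⌊α * n⌋₊ with hm
  have hf : (⌊α * n⌋₊ : ℝ) ≤ α * n := Nat.floor_le (by positivity)
  have hfn : 2 * ⌊α * n⌋₊ < n := by
    have : (2 * ⌊α * n⌋₊ : ℝ) < (n : ℝ) := by nlinarith
    exact_mod_cast this
  have hsub : 2 * k * ⌊α * n⌋₊ ≤ k * n := by
    calc 2 * k * ⌊α * n⌋₊ = k * (2 * ⌊α * n⌋₊) := by ring
    _ ≤ k * n := Nat.mul_le_mul_left k (le_of_lt hfn)
  have hmR : (m : ℝ) = (k:ℝ) * n - 2 * k * ⌊α * n⌋₊ := by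
    rw [hm, Nat.cast_sub hsub]; push_cast; ring
  have hkey : (1 + ε) * n ≤ c * m := by
    rw [hc, div_mul_eq_mul_div, le_div_iff₀ hden, hmR]
    have h1 : (0:ℝ) ≤ α * n - ⌊α * n⌋₊ := by linarith
    nlinarith [mul_nonneg (mul_nonneg (by linarith : (0:ℝ) ≤ 1 + ε)
      (by linarith : (0:ℝ) ≤ 2 * (k:ℝ))) h1]
  have hfact : (n.factorial : ℝ) ≤ (n:ℝ) ^ (n:ℕ) := by
    exact_mod_cast Nat.cast_le.mpr (Nat.factorial_le_pow n)
  have hppos : (0:ℝ) ≤ ((n:ℝ) ^ (-c)) ^ m :=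
    pow_nonneg (Real.rpow_nonneg (le_of_lt hnpos) _) m
  calc (n.factorial : ℝ) * ((n:ℝ) ^ (-(1 + ε) / ((k:ℝ) * (1 - 2 * α)))) ^ m
      = (n.factorial : ℝ) * ((n:ℝ) ^ (-c)) ^ m := by rw [hce]
    _ ≤ (n:ℝ) ^ (n:ℕ) * ((n:ℝ) ^ (-c)) ^ m := by
        apply mul_le_mul_of_nonneg_right hfact hppos
    _ = (n:ℝ) ^ ((n:ℝ) + (-c) * m) := by
        rw [Real.rpow_add hnpos, Real.rpow_natCast,
          ← Real.rpow_natCast ((n:ℝ) ^ (-c)) m, ← Real.rpow_mul (le_of_lt hnpos)]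
    _ ≤ (n:ℝ) ^ (-ε * n) := by
        apply Real.rpow_le_rpow_of_exponent_le hn1
        nlinarith
    _ ≤ (n:ℝ) ^ (-ε : ℝ) := by
        apply Real.rpow_le_rpow_of_exponent_le hn1
        nlinarith

set_option maxHeartbeats 2000000 in
/-- For `k ≥ 1`, constants `0 < α < 1/2` and `ε > 0`, `s = ⌊αn⌋`, `G = K_{s, n−s}`, and
`X` a binomial random graph `G(n, p)` with `p = n^{−(1+ε)/(k(1−2α))}`, with high
probability `G + X` contains no `k`th power of a Hamilton cycle. -/
theorem no_powHam_whp (k : ℕ) (hk : 1 ≤ k) (α ε : ℝ)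
    (hα0 : 0 < α) (hα : α < 1 / 2) (hε : 0 < ε) :
    Filter.Tendsto
      (fun n : ℕ =>
        binomProb n ((n : ℝ) ^ (-(1 + ε) / (k * (1 - 2 * α))))
          (fun ω => ∀ π : Equiv.Perm (Fin n),
            ¬ IsPowHamCycle n k
                (bipGraph n ⌊α * n⌋₊ ⊔ SimpleGraph.fromEdgeSet (↑ω)) π))
      Filter.atTop (nhds 1) := by
  have hkR : (1:ℝ) ≤ (k:ℝ) := by exact_mod_cast hk
  have hden : (0:ℝ) < (k:ℝ) * (1 - 2 * α) := by nlinarith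
  have hexp_neg : -(1 + ε) / ((k:ℝ) * (1 - 2 * α)) < 0 :=
    div_neg_of_neg_of_pos (by linarith) hden
  have hp0 : ∀ n : ℕ, 0 ≤ ((n:ℝ) ^ (-(1 + ε) / ((k:ℝ) * (1 - 2 * α)))) :=
    fun n => Real.rpow_nonneg (Nat.cast_nonneg n) _
  have hp1 : ∀ n : ℕ, ((n:ℝ) ^ (-(1 + ε) / ((k:ℝ) * (1 - 2 * α)))) ≤ 1 := by
    intro n
    rcases Nat.eq_zero_or_pos n with rfl | hn
    · rw [Nat.cast_zero, Real.zero_rpow (ne_of_lt hexp_neg)]; norm_num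
    · exact Real.rpow_le_one_of_one_le_of_nonpos (by exact_mod_cast hn) (le_of_lt hexp_neg)
  set g : ℕ → ℝ := fun n =>
    binomProb n ((n : ℝ) ^ (-(1 + ε) / (k * (1 - 2 * α))))
      (fun ω => ¬ ∀ π : Equiv.Perm (Fin n),
        ¬ IsPowHamCycle n k (bipGraph n ⌊α * n⌋₊ ⊔ SimpleGraph.fromEdgeSet (↑ω)) π) with hg
  have hQ : (fun n : ℕ =>
        binomProb n ((n : ℝ) ^ (-(1 + ε) / (k * (1 - 2 * α))))
          (fun ω => ∀ π : Equiv.Perm (Fin n),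
            ¬ IsPowHamCycle n k
                (bipGraph n ⌊α * n⌋₊ ⊔ SimpleGraph.fromEdgeSet (↑ω)) π))
      = fun n => 1 - g n := funext fun n => binomProb_compl _ _ _
  rw [hQ]
  suffices hgz : Filter.Tendsto g Filter.atTop (nhds 0) by
    have := (tendsto_const_nhds (x := (1:ℝ)) (f := Filter.atTop (α := ℕ))).sub hgz
    simpa using this
  refine tendsto_of_tendsto_of_tendsto_of_le_of_le'
    (g := fun _ : ℕ => (0:ℝ)) (h := fun n : ℕ => (n:ℝ) ^ (-ε : ℝ))
    tendsto_const_nhds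
    ((tendsto_rpow_neg_atTop hε).comp tendsto_natCast_atTop_atTop)
    (Filter.Eventually.of_forall fun n => binomProb_nonneg (hp0 n) (hp1 n) _) ?_
  · rw [Filter.eventually_atTop]
    refine ⟨2 * k + 1, fun n hn => ?_⟩
    have h2k : 2 * k < n := by omega
    calc g n ≤ ∑ π : Equiv.Perm (Fin n),
          binomProb n ((n : ℝ) ^ (-(1 + ε) / (k * (1 - 2 * α))))
            (fun ω => IsPowHamCycle n k
              (bipGraph n ⌊α * n⌋₊ ⊔ SimpleGraph.fromEdgeSet (↑ω)) π) :=
        binomProb_union_bound (hp0 n) (hp1 n) _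
      _ ≤ ∑ _π : Equiv.Perm (Fin n),
            ((n : ℝ) ^ (-(1 + ε) / (k * (1 - 2 * α)))) ^ (k * n - 2 * k * ⌊α * n⌋₊) := by
          apply Finset.sum_le_sum
          intro π _
          obtain ⟨S, hS1, hS2, hS3⟩ := exists_forced_edges n k ⌊α * n⌋₊ hk h2k π
          exact binomProb_le_of_superset (hp0 n) (hp1 n) hS1 hS3 hS2
      _ = (n.factorial : ℝ) *
            ((n : ℝ) ^ (-(1 + ε) / (k * (1 - 2 * α)))) ^ (k * n - 2 * k * ⌊α * n⌋₊) := by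
          rw [Finset.sum_const, Finset.card_univ, Fintype.card_perm, Fintype.card_fin,
            nsmul_eq_mul]
      _ ≤ (n:ℝ) ^ (-ε : ℝ) := final_bound k hk α ε hα0 hα hε n h2k
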